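/- Let Z_1, Z_2, ... be arbitrary Banach spaces, set X = (⊕_j Z_j)_{c_0}. Then for every closed subspace Y with X ⊆ Y ⊆ (⊕_j Z_j)_{ℓ^∞} and Y/X finite-dimensional, and every ε > 0, there is a bounded linear projection P from Y onto X with ‖I − P‖ < 1 + ε. -/

import Mathlib

open Filter Topology ENNReal

noncomputable def c0Submodule (Z : ℕ → Type*) [∀ j, NormedAddCommGroup (Z j)]
    [∀ j, NormedSpace ℝ (Z j)] : Submodule ℝ (lp Z ∞) where
  carrier := {f | Tendsto (fun j => ‖(f : ∀ j, Z j) j‖) atTop (𝓝 0)}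
  add_mem' := by
    intro f g hf hg
    have h := hf.add hg
    rw [add_zero] at h
    refine squeeze_zero (fun j => norm_nonneg _) (fun j => ?_) h
    simp only [lp.coeFn_add, Pi.add_apply]
    exact norm_add_le _ _
  zero_mem' := by
    simp only [Set.mem_setOf_eq, lp.coeFn_zero, Pi.zero_apply, norm_zero]
    exact tendsto_const_nhds
  smul_mem' := by
    intro c f hf
    have h := hf.const_mul ‖c‖
    rw [mul_zero] at h
    refine squeeze_zero (fun j => norm_nonneg _) (fun j => ?_) h
    simp only [lp.coeFn_smul, Pi.smul_apply]
    rw [norm_smul]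

section Aux

variable {Z : ℕ → Type*} [∀ j, NormedAddCommGroup (Z j)] [∀ j, NormedSpace ℝ (Z j)]

theorem memℓp_trunc (N : ℕ) (f : lp Z ∞) :
    Memℓp (fun j => if N ≤ j then (f : ∀ j, Z j) j else 0) ∞ := by
  rw [memℓp_infty_iff]
  refine ⟨‖f‖, ?_⟩
  rintro x ⟨j, rfl⟩
  dsimp only
  split
  · exact lp.norm_apply_le_norm ENNReal.top_ne_zero f j
  · simpa using norm_nonneg f

def trunc (N : ℕ) (f : lp Z ∞) : lp Z ∞ := ⟨fun j => if N ≤ j then f j else 0, memℓp_trunc N f⟩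

theorem trunc_apply (N : ℕ) (f : lp Z ∞) (j : ℕ) :
    (trunc N f : ∀ j, Z j) j = if N ≤ j then f j else 0 := rfl

theorem norm_trunc_le_of_forall {N : ℕ} {f : lp Z ∞} {C : ℝ} (hC : 0 ≤ C)
    (h : ∀ j, N ≤ j → ‖(f : ∀ j, Z j) j‖ ≤ C) : ‖trunc N f‖ ≤ C := by
  rw [lp.norm_eq_ciSup]
  refine ciSup_le fun j => ?_
  rw [trunc_apply]
  split
  · exact h j ‹_›
  · simpa using hC

theorem norm_trunc_le (N : ℕ) (f : lp Z ∞) : ‖trunc N f‖ ≤ ‖f‖ :=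
  norm_trunc_le_of_forall (norm_nonneg f) fun j _ => lp.norm_apply_le_norm ENNReal.top_ne_zero f j

theorem norm_trunc_antitone (f : lp Z ∞) : Antitone fun N => ‖trunc N f‖ := by
  intro N M h
  refine norm_trunc_le_of_forall (norm_nonneg _) fun j hj => ?_
  have : ‖(trunc N f : ∀ j, Z j) j‖ ≤ ‖trunc N f‖ :=
    lp.norm_apply_le_norm ENNReal.top_ne_zero (trunc N f) j
  rwa [trunc_apply, if_pos (h.trans hj)] at this

theorem trunc_add (N : ℕ) (f g : lp Z ∞) : trunc N (f + g) = trunc N f + trunc N g := by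
  refine lp.ext (funext fun j => ?_)
  simp only [lp.coeFn_add, Pi.add_apply, trunc_apply]
  split <;> simp

theorem trunc_smul (N : ℕ) (c : ℝ) (f : lp Z ∞) : trunc N (c • f) = c • trunc N f := by
  refine lp.ext (funext fun j => ?_)
  simp only [lp.coeFn_smul, Pi.smul_apply, trunc_apply]
  split <;> simp

/-- `trunc N` as a continuous linear map of norm at most 1. -/
noncomputable def truncL (N : ℕ) : lp Z ∞ →L[ℝ] lp Z ∞ :=
  LinearMap.mkContinuous
    { toFun := trunc N, map_add' := trunc_add N, map_smul' := trunc_smul N } 1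
    fun f => by simpa using norm_trunc_le N f

theorem truncL_apply (N : ℕ) (f : lp Z ∞) : truncL N f = trunc N f := rfl

theorem sub_trunc_mem_c0 (N : ℕ) (f : lp Z ∞) : f - trunc N f ∈ c0Submodule Z := by
  show Tendsto (fun j => ‖((f - trunc N f : lp Z ∞) : ∀ j, Z j) j‖) atTop (𝓝 0)
  have hev : ∀ᶠ j in atTop, (0 : ℝ) = ‖((f - trunc N f : lp Z ∞) : ∀ j, Z j) j‖ := by
    refine eventually_atTop.2 ⟨N, fun j hj => ?_⟩
    simp [lp.coeFn_sub, trunc_apply, if_pos hj]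
  exact tendsto_const_nhds.congr' hev

theorem trunc_c0_small {f : lp Z ∞} (hf : f ∈ c0Submodule Z) {ε : ℝ} (hε : 0 < ε) :
    ∃ N, ‖trunc N f‖ ≤ ε := by
  have hf' : Tendsto (fun j => ‖(f : ∀ j, Z j) j‖) atTop (𝓝 0) := hf
  obtain ⟨N, hN⟩ := (Metric.tendsto_atTop.1 hf') ε hε
  refine ⟨N, norm_trunc_le_of_forall hε.le fun j hj => ?_⟩
  have := hN j hj
  rw [Real.dist_0_eq_abs, abs_of_nonneg (norm_nonneg _)] at this
  exact this.le

theorem isClosed_c0 : IsClosed ((c0Submodule Z : Submodule ℝ (lp Z ∞)) : Set (lp Z ∞)) := by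
  refine isClosed_of_closure_subset fun f hf => ?_
  show Tendsto (fun j => ‖(f : ∀ j, Z j) j‖) atTop (𝓝 0)
  rw [Metric.tendsto_atTop]
  intro ε hε
  obtain ⟨g, hg, hfg⟩ := Metric.mem_closure_iff.1 hf (ε / 2) (half_pos hε)
  have hg' : Tendsto (fun j => ‖(g : ∀ j, Z j) j‖) atTop (𝓝 0) := hg
  obtain ⟨N, hN⟩ := (Metric.tendsto_atTop.1 hg') (ε / 2) (half_pos hε)
  refine ⟨N, fun j hj => ?_⟩
  have h1 : ‖(g : ∀ j, Z j) j‖ < ε / 2 := by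
    have := hN j hj
    rwa [Real.dist_0_eq_abs, abs_of_nonneg (norm_nonneg _)] at this
  have h2 : ‖(f : ∀ j, Z j) j - (g : ∀ j, Z j) j‖ ≤ ‖f - g‖ := by
    have := lp.norm_apply_le_norm ENNReal.top_ne_zero (f - g) j
    rwa [lp.coeFn_sub, Pi.sub_apply] at this
  have h3 : ‖f - g‖ < ε / 2 := by rwa [← dist_eq_norm]
  rw [Real.dist_0_eq_abs, abs_of_nonneg (norm_nonneg _)]
  calc ‖(f : ∀ j, Z j) j‖ = ‖((f : ∀ j, Z j) j - (g : ∀ j, Z j) j) + (g : ∀ j, Z j) j‖ := by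
        rw [sub_add_cancel]
    _ ≤ ‖(f : ∀ j, Z j) j - (g : ∀ j, Z j) j‖ + ‖(g : ∀ j, Z j) j‖ := norm_add_le _ _
    _ < ε := by linarith

end Aux

set_option maxHeartbeats 1600000 in
set_option synthInstance.maxHeartbeats 400000 in
theorem stmt8 (Z : ℕ → Type*) [∀ j, NormedAddCommGroup (Z j)] [∀ j, NormedSpace ℝ (Z j)]
    [∀ j, CompleteSpace (Z j)]
    (Y : Submodule ℝ (lp Z ∞)) (hYclosed : IsClosed (Y : Set (lp Z ∞)))
    (hXY : c0Submodule Z ≤ Y)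
    (hfin : FiniteDimensional ℝ (↥Y ⧸ (c0Submodule Z).comap Y.subtype)) :
    ∀ ε > (0 : ℝ), ∃ P : ↥Y →L[ℝ] ↥Y,
      (∀ y : ↥Y, (↑(P y) : lp Z ∞) ∈ c0Submodule Z) ∧
      (∀ y : ↥Y, (↑y : lp Z ∞) ∈ c0Submodule Z → P y = y) ∧
      ‖ContinuousLinearMap.id ℝ ↥Y - P‖ < 1 + ε := by
  intro ε hε
  set X' : Submodule ℝ ↥Y := (c0Submodule Z).comap Y.subtype with hX'
  haveI hX'closed : IsClosed (X' : Set ↥Y) :=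
    IsClosed.preimage continuous_subtype_val isClosed_c0
  -- a linear lift of the quotient map
  let b := Module.finBasis ℝ (↥Y ⧸ X')
  let L0 : (↥Y ⧸ X') →ₗ[ℝ] ↥Y :=
    b.constr ℝ fun i => (X'.mkQ_surjective (b i)).choose
  have hL0 : ∀ f, X'.mkQ (L0 f) = f := by
    have h : X'.mkQ.comp L0 = LinearMap.id := by
      refine b.ext fun i => ?_
      simp only [LinearMap.comp_apply, LinearMap.id_apply, L0, Module.Basis.constr_basis]
      exact (X'.mkQ_surjective (b i)).choose_spec
    intro f
    exact DFunLike.congr_fun h f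
  have hL0cont : Continuous L0 := LinearMap.continuous_of_finiteDimensional L0
  -- the quantitative functions
  set g : ℕ → (↥Y ⧸ X') → ℝ := fun N f => ‖truncL N ((L0 f : ↥Y) : lp Z ∞)‖ with hg
  have hgcont : ∀ N, Continuous (g N) :=
    fun N => ((truncL N).continuous.comp (continuous_subtype_val.comp hL0cont)).norm
  -- ‖f‖ ≤ g N f
  have hq_le : ∀ N f, ‖f‖ ≤ g N f := by
    intro N f
    have hmem : ((L0 f : ↥Y) : lp Z ∞) - trunc N ((L0 f : ↥Y) : lp Z ∞) ∈ c0Submodule Z :=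
      sub_trunc_mem_c0 N _
    set d : ↥Y := ⟨_, hXY hmem⟩ with hd
    have hcoe : ((L0 f - d : ↥Y) : lp Z ∞) = trunc N ((L0 f : ↥Y) : lp Z ∞) := by
      simp only [hd, Submodule.coe_sub]
      exact _root_.sub_sub_cancel _ _
    have hdX' : d ∈ X' := hmem
    have hqd : X'.mkQ (L0 f - d) = f := by
      rw [map_sub, hL0, Submodule.mkQ_apply, (Submodule.Quotient.mk_eq_zero X').2 hdX', sub_zero]
    calc ‖f‖ = ‖X'.mkQ (L0 f - d)‖ := by rw [hqd]
      _ ≤ ‖L0 f - d‖ := Submodule.Quotient.norm_mk_le X' _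
      _ = g N f := by
          show ‖((L0 f - d : ↥Y) : lp Z ∞)‖ = _
          rw [hcoe]; rfl
  have hanti : ∀ f, Antitone fun N => g N f := fun f => norm_trunc_antitone _
  -- g N f gets close to ‖f‖
  have hlim : ∀ f : ↥Y ⧸ X', ∀ δ > (0:ℝ), ∃ N, g N f < ‖f‖ + δ := by
    intro f δ hδ
    obtain ⟨m, hm, hmlt⟩ := Submodule.Quotient.norm_mk_lt f (half_pos hδ)
    have hX'm : L0 f - m ∈ X' := by
      rw [← Submodule.Quotient.mk_eq_zero X', Submodule.Quotient.mk_sub]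
      have h1 : (Submodule.Quotient.mk (L0 f) : ↥Y ⧸ X') = f := hL0 f
      rw [h1, hm, sub_self]
    have hdm : ((L0 f - m : ↥Y) : lp Z ∞) ∈ c0Submodule Z := hX'm
    obtain ⟨N, hN⟩ := trunc_c0_small hdm (show (0:ℝ) < δ/4 by linarith)
    refine ⟨N, ?_⟩
    have hsplit : ((L0 f : ↥Y) : lp Z ∞) = (m : lp Z ∞) + ((L0 f - m : ↥Y) : lp Z ∞) := by
      push_cast
      abel
    have : g N f ≤ ‖trunc N ((m : ↥Y) : lp Z ∞)‖ + ‖trunc N ((L0 f - m : ↥Y) : lp Z ∞)‖ := by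
      rw [hg]
      show ‖trunc N ((L0 f : ↥Y) : lp Z ∞)‖ ≤ _
      rw [hsplit, trunc_add]
      exact norm_add_le _ _
    have hmn : ‖trunc N ((m : ↥Y) : lp Z ∞)‖ ≤ ‖m‖ := norm_trunc_le N _
    have : g N f ≤ ‖m‖ + δ/4 := by linarith
    linarith
  -- compactness: uniform N on the sphere
  have key : ∃ N, ∀ f : ↥Y ⧸ X', ‖f‖ = 1 → g N f < 1 + ε / 2 := by
    set S := Metric.sphere (0 : ↥Y ⧸ X') 1 with hS
    haveI : ProperSpace (↥Y ⧸ X') := @FiniteDimensional.proper ℝ _ (↥Y ⧸ X')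
      (Submodule.Quotient.normedAddCommGroup X') (Submodule.Quotient.normedSpace X' ℝ) _ hfin
    have hScompact : IsCompact S := isCompact_sphere 0 1
    have hchoice : ∀ f : S, ∃ N, g N (f : ↥Y ⧸ X') < 1 + ε / 2 := by
      intro f
      have hf1 : ‖(f : ↥Y ⧸ X')‖ = 1 := mem_sphere_zero_iff_norm.1 f.2
      obtain ⟨N, hN⟩ := hlim f (ε / 2) (half_pos hε)
      exact ⟨N, by rwa [hf1] at hN⟩
    choose Nf hNf using hchoice
    have hopen : ∀ f : S, IsOpen {x : ↥Y ⧸ X' | g (Nf f) x < 1 + ε / 2} :=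
      fun f => isOpen_lt (hgcont (Nf f)) continuous_const
    have hcover : S ⊆ ⋃ f : S, {x | g (Nf f) x < 1 + ε / 2} :=
      fun x hx => Set.mem_iUnion.2 ⟨⟨x, hx⟩, hNf ⟨x, hx⟩⟩
    obtain ⟨t, ht⟩ := hScompact.elim_finite_subcover _ hopen hcover
    refine ⟨t.sup Nf, fun f hf => ?_⟩
    have hfS : f ∈ S := mem_sphere_zero_iff_norm.2 hf
    obtain ⟨i, hit, hi⟩ := Set.mem_iUnion₂.1 (ht hfS)
    exact lt_of_le_of_lt (hanti f (Finset.le_sup hit)) hi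
  obtain ⟨N, hN⟩ := key
  -- global bound by homogeneity
  have hbound : ∀ f : ↥Y ⧸ X', g N f ≤ (1 + ε / 2) * ‖f‖ := by
    intro f
    rcases eq_or_ne f 0 with rfl | hf0
    · have : g N 0 = 0 := by simp [hg, map_zero]
      simp [this]
      exact mul_nonneg (by linarith) (norm_nonneg _)
    · have hnf : (0:ℝ) < ‖f‖ := norm_pos_iff.2 hf0
      set x := ‖f‖⁻¹ • f with hx
      have hxn : ‖x‖ = 1 := by
        have h := @norm_smul ℝ _ _ _ _ (@NormedSpace.toNormSMulClass ℝ _ _ _ (Submodule.Quotient.normedSpace X' ℝ)) (‖f‖⁻¹) f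
        rw [hx, h, norm_inv, Real.norm_of_nonneg hnf.le, inv_mul_cancel₀ hnf.ne']
      have hfx : f = ‖f‖ • x := by
        rw [hx, smul_smul, mul_inv_cancel₀ hnf.ne', one_smul]
      have hgsmul : g N f = ‖f‖ * g N x := by
        show ‖truncL N ((L0 f : ↥Y) : lp Z ∞)‖ = ‖f‖ * ‖truncL N ((L0 x : ↥Y) : lp Z ∞)‖
        conv_lhs => rw [hfx]
        rw [map_smul]
        have hcoe : (((‖f‖ • L0 x : ↥Y)) : lp Z ∞) = ‖f‖ • ((L0 x : ↥Y) : lp Z ∞) := rfl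
        rw [hcoe, map_smul]
        have h2 := norm_smul ‖f‖ (truncL N ((L0 x : ↥Y) : lp Z ∞))
        rw [h2, Real.norm_of_nonneg hnf.le]
      have := (hN x hxn).le
      calc g N f = ‖f‖ * g N x := hgsmul
        _ ≤ ‖f‖ * (1 + ε / 2) := by
            exact mul_le_mul_of_nonneg_left this hnf.le
        _ = (1 + ε / 2) * ‖f‖ := mul_comm _ _
  -- build the lift into Y
  have hmemY : ∀ f : ↥Y ⧸ X', (trunc N ((L0 f : ↥Y) : lp Z ∞)) ∈ Y := by
    intro f
    have h1 : ((L0 f : ↥Y) : lp Z ∞) - trunc N ((L0 f : ↥Y) : lp Z ∞) ∈ Y :=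
      hXY (sub_trunc_mem_c0 N _)
    have h2 := Y.sub_mem (L0 f).2 h1
    rwa [_root_.sub_sub_cancel] at h2
  let Lift : (↥Y ⧸ X') →ₗ[ℝ] ↥Y :=
    { toFun := fun f => ⟨trunc N ((L0 f : ↥Y) : lp Z ∞), hmemY f⟩
      map_add' := by
        intro a b
        apply Subtype.ext
        show trunc N ((L0 (a + b) : ↥Y) : lp Z ∞) = _
        rw [map_add]
        have : (((L0 a + L0 b : ↥Y)) : lp Z ∞) = ((L0 a : ↥Y) : lp Z ∞) + ((L0 b : ↥Y) : lp Z ∞) := rfl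
        rw [this, trunc_add]
        rfl
      map_smul' := by
        intro c a
        apply Subtype.ext
        show trunc N ((L0 (c • a) : ↥Y) : lp Z ∞) = _
        rw [map_smul]
        have : (((c • L0 a : ↥Y)) : lp Z ∞) = c • ((L0 a : ↥Y) : lp Z ∞) := rfl
        rw [this, trunc_smul]
        rfl }
  have hLiftq : ∀ f, X'.mkQ (Lift f) = f := by
    intro f
    have hmem : Lift f - L0 f ∈ X' := by
      show ((Lift f - L0 f : ↥Y) : lp Z ∞) ∈ c0Submodule Z
      have : ((Lift f - L0 f : ↥Y) : lp Z ∞)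
          = -(((L0 f : ↥Y) : lp Z ∞) - trunc N ((L0 f : ↥Y) : lp Z ∞)) := by
        push_cast
        show trunc N ((L0 f : ↥Y) : lp Z ∞) - ((L0 f : ↥Y) : lp Z ∞) = _
        abel
      rw [this]
      exact (c0Submodule Z).neg_mem (sub_trunc_mem_c0 N _)
    have := (Submodule.Quotient.mk_eq_zero X').2 hmem
    rw [Submodule.Quotient.mk_sub] at this
    have h2 : (Submodule.Quotient.mk (Lift f) : ↥Y ⧸ X') = Submodule.Quotient.mk (L0 f) :=
      sub_eq_zero.1 this
    show (Submodule.Quotient.mk (Lift f) : ↥Y ⧸ X') = f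
    rw [h2]
    exact hL0 f
  have hLiftnorm : ∀ f, ‖Lift f‖ ≤ (1 + ε / 2) * ‖f‖ := by
    intro f
    have : ‖Lift f‖ = g N f := rfl
    rw [this]
    exact hbound f
  let Liftc : (↥Y ⧸ X') →L[ℝ] ↥Y := LinearMap.toContinuousLinearMap Lift
  let mkQc : ↥Y →L[ℝ] (↥Y ⧸ X') :=
    LinearMap.mkContinuous X'.mkQ 1 fun y => by
      rw [one_mul]; exact Submodule.Quotient.norm_mk_le X' y
  refine ⟨ContinuousLinearMap.id ℝ ↥Y - Liftc.comp mkQc, ?_, ?_, ?_⟩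
  · intro y
    have hPy : (ContinuousLinearMap.id ℝ ↥Y - Liftc.comp mkQc) y = y - Lift (X'.mkQ y) := rfl
    have hq0 : X'.mkQ (y - Lift (X'.mkQ y)) = 0 := by
      rw [map_sub, hLiftq, sub_self]
    have hmem : y - Lift (X'.mkQ y) ∈ X' := (Submodule.Quotient.mk_eq_zero X').1 hq0
    rw [hPy]
    exact hmem
  · intro y hy
    have hyX' : y ∈ X' := hy
    have h0 : X'.mkQ y = 0 := (Submodule.Quotient.mk_eq_zero X').2 hyX'
    show y - Lift (X'.mkQ y) = y
    rw [h0, map_zero, sub_zero]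
  · have hid : ContinuousLinearMap.id ℝ ↥Y - (ContinuousLinearMap.id ℝ ↥Y - Liftc.comp mkQc)
        = Liftc.comp mkQc := sub_sub_cancel _ _
    rw [hid]
    have hle : ‖Liftc.comp mkQc‖ ≤ 1 + ε / 2 := by
      refine ContinuousLinearMap.opNorm_le_bound _ (by linarith) fun y => ?_
      have h1 : ‖Lift (X'.mkQ y)‖ ≤ (1 + ε / 2) * ‖X'.mkQ y‖ := hLiftnorm _
      have h2 : ‖X'.mkQ y‖ ≤ ‖y‖ := Submodule.Quotient.norm_mk_le X' y
      calc ‖(Liftc.comp mkQc) y‖ = ‖Lift (X'.mkQ y)‖ := rfl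
        _ ≤ (1 + ε / 2) * ‖X'.mkQ y‖ := h1
        _ ≤ (1 + ε / 2) * ‖y‖ := mul_le_mul_of_nonneg_left h2 (by linarith)
    linarith
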